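/- Let x^d ∈ P(V) be strictly positive, let w ∈ {0,1}^{M×M} be symmetric with zero diagonal, and let g, G(·), D be as in the density-feedback construction. Then the probability simplex is forward invariant for the closed-loop dynamics: if x : [0,∞) → ℝ^M is differentiable with x'(t) = G(x(t))^T D x(t) for all t ≥ 0 and x(0) ∈ P(V), then x(t) ∈ P(V) for all t ≥ 0. -/

import Mathlib

open Matrix

noncomputable section

/-- The probability simplex `P(V)` in `ℝ^M`. -/
def probSimplex (M : ℕ) : Set (Fin M → ℝ) :=
  {x | (∀ i, 0 ≤ x i) ∧ ∑ i, x i = 1}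

/-- `g_i(x) = (x_i - x^d_i)²`. -/
def gfun {M : ℕ} (xd x : Fin M → ℝ) (i : Fin M) : ℝ := (x i - xd i) ^ 2

/-- The density-feedback transition-rate matrix `G(x)`:
`G(x)^{ij} = w_{ij} (g_i(x) + g_j(x))` for `i ≠ j`, and
`G(x)^{ii} = -∑_{k ≠ i} w_{ik} (g_i(x) + g_k(x))`. -/
def Gmat {M : ℕ} (xd : Fin M → ℝ) (w : Matrix (Fin M) (Fin M) ℝ) (x : Fin M → ℝ) :
    Matrix (Fin M) (Fin M) ℝ :=
  fun i j =>
    if i = j then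
      -∑ k ∈ Finset.univ.filter (fun k => k ≠ i), w i k * (gfun xd x i + gfun xd x k)
    else w i j * (gfun xd x i + gfun xd x j)

/-- The diagonal matrix `D` with `D^{ii} = 1 / x^d_i`. -/
def Dmat {M : ℕ} (xd : Fin M → ℝ) : Matrix (Fin M) (Fin M) ℝ :=
  Matrix.diagonal fun i => 1 / xd i

lemma gfun_nonneg {M : ℕ} (xd x : Fin M → ℝ) (i : Fin M) : 0 ≤ gfun xd x i := sq_nonneg _

lemma Gmat_offdiag_nonneg {M : ℕ} {xd : Fin M → ℝ} {w : Matrix (Fin M) (Fin M) ℝ}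
    (h01 : ∀ i j, w i j = 0 ∨ w i j = 1) (x : Fin M → ℝ) {i j : Fin M} (hij : i ≠ j) :
    0 ≤ Gmat xd w x i j := by
  simp only [Gmat, if_neg hij]
  have hw : 0 ≤ w i j := by rcases h01 i j with h | h <;> simp [h]
  exact mul_nonneg hw (add_nonneg (gfun_nonneg _ _ _) (gfun_nonneg _ _ _))

lemma Gmat_row_sum {M : ℕ} (xd : Fin M → ℝ) (w : Matrix (Fin M) (Fin M) ℝ)
    (x : Fin M → ℝ) (i : Fin M) : ∑ j, Gmat xd w x i j = 0 := by
  classical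
  rw [← Finset.add_sum_erase _ _ (Finset.mem_univ i)]
  have h1 : Gmat xd w x i i
      = -∑ k ∈ Finset.univ.filter (fun k => k ≠ i), w i k * (gfun xd x i + gfun xd x k) := by
    simp [Gmat]
  have h2 : ∑ j ∈ Finset.univ.erase i, Gmat xd w x i j
      = ∑ j ∈ Finset.univ.filter (fun k => k ≠ i), w i j * (gfun xd x i + gfun xd x j) := by
    rw [← Finset.filter_ne']
    refine Finset.sum_congr rfl fun j hj => ?_
    have : i ≠ j := fun h => (Finset.mem_filter.1 hj).2 h.symm
    simp [Gmat, this]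
  rw [h1, h2]
  ring

lemma vf_apply {M : ℕ} (xd : Fin M → ℝ) (w : Matrix (Fin M) (Fin M) ℝ)
    (y : Fin M → ℝ) (i : Fin M) :
    ((Gmat xd w y)ᵀ.mulVec ((Dmat xd).mulVec y)) i = ∑ j, Gmat xd w y j i * (y j / xd j) := by
  have hD : (Dmat xd).mulVec y = fun j => y j / xd j := by
    funext j
    simp only [Dmat, Matrix.mulVec_diagonal]
    ring
  rw [hD]
  simp only [Matrix.mulVec, dotProduct, Matrix.transpose_apply]

lemma sum_vf {M : ℕ} (xd : Fin M → ℝ) (w : Matrix (Fin M) (Fin M) ℝ) (y : Fin M → ℝ) :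
    ∑ i, ((Gmat xd w y)ᵀ.mulVec ((Dmat xd).mulVec y)) i = 0 := by
  simp only [vf_apply]
  rw [Finset.sum_comm]
  refine Finset.sum_eq_zero fun j _ => ?_
  rw [← Finset.sum_mul, Gmat_row_sum, zero_mul]

lemma continuous_Gmat {M : ℕ} (xd : Fin M → ℝ) (w : Matrix (Fin M) (Fin M) ℝ) (i j : Fin M) :
    Continuous fun y : Fin M → ℝ => Gmat xd w y i j := by
  unfold Gmat gfun
  by_cases h : i = j <;> simp only [h, if_true, if_false, if_pos, if_neg, ne_eq,
    not_false_iff] <;> fun_prop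
/-- the probability simplex is forward invariant for the closed-loop
dynamics `ẋ = G(x)ᵀ D x`. -/
theorem simplex_forward_invariant
    (M : ℕ) (xd : Fin M → ℝ)
    (hxd : xd ∈ probSimplex M) (hpos : ∀ i, 0 < xd i)
    (w : Matrix (Fin M) (Fin M) ℝ)
    (h01 : ∀ i j, w i j = 0 ∨ w i j = 1)
    (hsymm : ∀ i j, w i j = w j i) (hdiag : ∀ i, w i i = 0)
    (x : ℝ → Fin M → ℝ)
    (hderiv : ∀ t : ℝ, 0 ≤ t →
      HasDerivWithinAt x ((Gmat xd w (x t))ᵀ.mulVec ((Dmat xd).mulVec (x t)))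
        (Set.Ici 0) t)
    (h0 : x 0 ∈ probSimplex M) :
    ∀ t : ℝ, 0 ≤ t → x t ∈ probSimplex M := by
  classical
  rcases Nat.eq_zero_or_pos M with hM0 | hM0
  · exact absurd h0.2 (by subst hM0; simp)
  haveI : Nonempty (Fin M) := ⟨⟨0, hM0⟩⟩
  set vf : ℝ → Fin M → ℝ :=
    fun t => (Gmat xd w (x t))ᵀ.mulVec ((Dmat xd).mulVec (x t)) with hvfdef
  have hxc : ContinuousOn x (Set.Ici 0) := fun t ht => (hderiv t ht).continuousWithinAt
  have hxci : ∀ i, ContinuousOn (fun t => x t i) (Set.Ici 0) :=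
    fun i => (continuous_apply i).comp_continuousOn hxc
  have hdi : ∀ i, ∀ t, 0 ≤ t → HasDerivWithinAt (fun s => x s i) (vf t i) (Set.Ici 0) t :=
    fun i t ht => hasDerivWithinAt_pi.1 (hderiv t ht) i
  have hsumvf : ∀ s, ∑ i, vf s i = 0 := fun s => sum_vf xd w (x s)
  -- Part 1 : the sum is conserved
  have hsum : ∀ t, 0 ≤ t → ∑ i, x t i = 1 := by
    intro t ht
    have hc : ContinuousOn (fun s => ∑ i, x s i) (Set.Icc 0 t) :=
      ((continuous_finset_sum Finset.univ fun i _ => continuous_apply i).comp_continuousOn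
        hxc).mono Set.Icc_subset_Ici_self
    have hd : ∀ s ∈ Set.Ico 0 t, HasDerivWithinAt (fun u => ∑ i, x u i) 0 (Set.Ici s) s := by
      intro s hs
      have h1 : HasDerivWithinAt (fun u => ∑ i, x u i) (∑ i, vf s i) (Set.Ici 0) s :=
        HasDerivWithinAt.fun_sum fun i _ => hdi i s hs.1
      rw [hsumvf] at h1
      exact h1.mono (Set.Ici_subset_Ici.2 hs.1)
    have := constant_of_has_deriv_right_zero hc hd t (Set.right_mem_Icc.2 ht)
    rw [this]
    exact h0.2
  -- Part 2 : nonnegativity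
  have hnonneg : ∀ T, 0 ≤ T → ∀ i, 0 ≤ x T i := by
    intro T hT
    set f : ℝ → ℝ := fun t => Finset.univ.sup' Finset.univ_nonempty (fun i => -x t i)
      with hfdef
    have hfle : ∀ t i, -x t i ≤ f t := fun t i =>
      Finset.le_sup' (fun j => -x t j) (Finset.mem_univ i)
    have hfc : ContinuousOn f (Set.Icc 0 T) :=
      ContinuousOn.finset_sup'_apply Finset.univ_nonempty
        (fun i _ => ((hxci i).neg).mono Set.Icc_subset_Ici_self)
    have hAne : ∀ t, (Finset.univ.filter (fun i => -x t i = f t)).Nonempty := by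
      intro t
      obtain ⟨i, -, hi⟩ := Finset.exists_mem_eq_sup' Finset.univ_nonempty (fun i => -x t i)
      exact ⟨i, Finset.mem_filter.2 ⟨Finset.mem_univ i, hi.symm⟩⟩
    set f' : ℝ → ℝ := fun t =>
      (Finset.univ.filter (fun i => -x t i = f t)).sup' (hAne t) (fun i => -vf t i)
      with hf'def
    -- a uniform bound for the coefficients
    set φ : ℝ → ℝ := fun t => ∑ i, ∑ j, |Gmat xd w (x t) j i| / xd j with hφdef
    have hφc : ContinuousOn φ (Set.Icc 0 T) := by
      have hcy : Continuous fun y : Fin M → ℝ => ∑ i, ∑ j, |Gmat xd w y j i| / xd j := by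
        refine continuous_finset_sum _ fun i _ => continuous_finset_sum _ fun j _ => ?_
        exact ((continuous_Gmat xd w j i).abs).div_const _
      exact (hcy.comp_continuousOn hxc).mono Set.Icc_subset_Ici_self
    obtain ⟨L, hL⟩ :=
      (isCompact_Icc : IsCompact (Set.Icc (0:ℝ) T)).exists_bound_of_continuousOn hφc
    have hφL : ∀ t ∈ Set.Icc 0 T, φ t ≤ L := fun t ht =>
      (le_abs_self _).trans (by simpa [Real.norm_eq_abs] using hL t ht)
    -- the liminf-slope hypothesis
    have hf'cond : ∀ s ∈ Set.Ico 0 T, ∀ r, f' s < r →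
        ∃ᶠ z in nhdsWithin s (Set.Ioi s), slope f s z < r := by
      intro s hs r hr
      apply Filter.Eventually.frequently
      have hmem : nhdsWithin s (Set.Ioi s) ≤ nhdsWithin s (Set.Ici 0 \ {s}) :=
        nhdsWithin_mono s (fun z hz => ⟨le_trans hs.1 (le_of_lt hz), ne_of_gt hz⟩)
      have hmem2 : nhdsWithin s (Set.Ioi s) ≤ nhdsWithin s (Set.Ici 0) :=
        nhdsWithin_mono s (fun z hz => le_trans hs.1 (le_of_lt hz))
      have hev : ∀ i : Fin M, ∀ᶠ z in nhdsWithin s (Set.Ioi s),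
          -x z i < f s + r * (z - s) := by
        intro i
        by_cases hiA : -x s i = f s
        · have hle : -vf s i ≤ f' s :=
            Finset.le_sup' (fun j => -vf s j) (Finset.mem_filter.2 ⟨Finset.mem_univ i, hiA⟩)
          have hder : HasDerivWithinAt (fun u => -x u i) (-vf s i) (Set.Ici 0) s :=
            (hdi i s hs.1).neg
          have hslope : Filter.Tendsto (slope (fun u => -x u i) s)
              (nhdsWithin s (Set.Ioi s)) (nhds (-vf s i)) :=
            (hasDerivWithinAt_iff_tendsto_slope.1 hder).mono_left hmem
          have h1 : ∀ᶠ z in nhdsWithin s (Set.Ioi s), slope (fun u => -x u i) s z < r :=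
            hslope.eventually_lt_const (lt_of_le_of_lt hle hr)
          filter_upwards [h1, self_mem_nhdsWithin] with z h2 h3
          have h3' : s < z := h3
          rw [slope_def_field, div_lt_iff₀ (sub_pos.2 h3')] at h2
          linarith
        · have hlt : -x s i < f s := lt_of_le_of_ne (hfle s i) hiA
          have h1 : ∀ᶠ z in nhdsWithin s (Set.Ioi s),
              -x z i < (-x s i + f s) / 2 := by
            have ht : Filter.Tendsto (fun u => -x u i) (nhdsWithin s (Set.Ioi s))
                (nhds (-x s i)) :=
              (((hxci i).neg) s hs.1).tendsto.mono_left hmem2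
            exact ht.eventually_lt_const (by linarith)
          have h2 : ∀ᶠ z in nhdsWithin s (Set.Ioi s),
              (-x s i + f s) / 2 < f s + r * (z - s) := by
            have ht : Filter.Tendsto (fun z : ℝ => f s + r * (z - s))
                (nhdsWithin s (Set.Ioi s)) (nhds (f s + r * (s - s))) := by
              apply Filter.Tendsto.mono_left ?_ nhdsWithin_le_nhds
              have hcont : Continuous fun z : ℝ => f s + r * (z - s) := by fun_prop
              exact hcont.tendsto s
            refine ht.eventually_const_lt ?_
            simp only [sub_self, mul_zero, add_zero]
            linarith
          filter_upwards [h1, h2] with z ha hb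
          linarith
      have hall : ∀ᶠ z in nhdsWithin s (Set.Ioi s),
          ∀ i ∈ Finset.univ, -x z i < f s + r * (z - s) :=
        (Filter.eventually_all_finset _).2 fun i _ => hev i
      filter_upwards [hall, self_mem_nhdsWithin] with z h1 h2
      have h2' : s < z := h2
      have hfz : f z < f s + r * (z - s) :=
        (Finset.sup'_lt_iff Finset.univ_nonempty).2 fun i hi => h1 i hi
      rw [slope_def_field, div_lt_iff₀ (sub_pos.2 h2')]
      linarith
    -- for every ε > 0, f stays below the barrier
    have key : ∀ ε : ℝ, 0 < ε → ∀ t ∈ Set.Icc 0 T, f t ≤ ε * Real.exp ((L + 1) * t) := by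
      intro ε hε
      set B : ℝ → ℝ := fun t => ε * Real.exp ((L + 1) * t) with hBdef
      set B' : ℝ → ℝ := fun t => ε * (Real.exp ((L + 1) * t) * (L + 1)) with hB'def
      have hBpos : ∀ t, 0 < B t := fun t => mul_pos hε (Real.exp_pos _)
      have hB : ∀ s, HasDerivAt B (B' s) s := by
        intro s
        have h1 : HasDerivAt (fun t : ℝ => (L + 1) * t) (L + 1) s := by
          simpa using (hasDerivAt_id s).const_mul (L + 1)
        exact ((Real.hasDerivAt_exp _).comp s h1).const_mul ε
      have ha : f 0 ≤ B 0 := by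
        refine Finset.sup'_le _ _ fun i _ => ?_
        have := h0.1 i
        have := hBpos 0
        linarith
      have hbound : ∀ s ∈ Set.Ico 0 T, f s = B s → f' s < B' s := by
        intro s hs hfB
        have hm : 0 < f s := hfB ▸ hBpos s
        refine (Finset.sup'_lt_iff (hAne s)).2 fun i hi => ?_
        obtain ⟨-, hiA⟩ := Finset.mem_filter.1 hi
        have hxj : ∀ j, -f s ≤ x s j := fun j => by have := hfle s j; linarith
        have hterm : ∀ j, -(|Gmat xd w (x s) j i| / xd j * f s)
            ≤ Gmat xd w (x s) j i * (x s j / xd j) := by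
          intro j
          rcases eq_or_ne j i with rfl | hji
          · have hxi : x s j = -f s := by linarith [hiA]
            rw [hxi]
            have h2 : -|Gmat xd w (x s) j j| ≤ -Gmat xd w (x s) j j :=
              neg_le_neg (le_abs_self _)
            have h3 : 0 ≤ f s / xd j := div_nonneg hm.le (hpos j).le
            calc -(|Gmat xd w (x s) j j| / xd j * f s)
                = -|Gmat xd w (x s) j j| * (f s / xd j) := by ring
              _ ≤ -Gmat xd w (x s) j j * (f s / xd j) :=
                  mul_le_mul_of_nonneg_right h2 h3
              _ = Gmat xd w (x s) j j * (-f s / xd j) := by ring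
          · have hG : 0 ≤ Gmat xd w (x s) j i := Gmat_offdiag_nonneg h01 _ hji
            have h4 : -f s / xd j ≤ x s j / xd j := by
              have h := hxj j
              have hx0 : (0:ℝ) ≤ xd j := (hpos j).le
              gcongr
            have h5 : -(f s / xd j) ≤ 0 := by
              have : 0 ≤ f s / xd j := div_nonneg hm.le (hpos j).le
              linarith
            calc -(|Gmat xd w (x s) j i| / xd j * f s)
                = |Gmat xd w (x s) j i| * -(f s / xd j) := by ring
              _ ≤ Gmat xd w (x s) j i * -(f s / xd j) :=
                  mul_le_mul_of_nonpos_right (le_abs_self _) h5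
              _ = Gmat xd w (x s) j i * (-f s / xd j) := by ring
              _ ≤ Gmat xd w (x s) j i * (x s j / xd j) :=
                  mul_le_mul_of_nonneg_left h4 hG
        have hvfi : vf s i = ∑ j, Gmat xd w (x s) j i * (x s j / xd j) := vf_apply xd w (x s) i
        have hsum1 : -((∑ j, |Gmat xd w (x s) j i| / xd j) * f s) ≤ vf s i := by
          rw [hvfi]
          calc -((∑ j, |Gmat xd w (x s) j i| / xd j) * f s)
              = ∑ j, -(|Gmat xd w (x s) j i| / xd j * f s) := by
                rw [Finset.sum_neg_distrib, ← Finset.sum_mul]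
            _ ≤ _ := Finset.sum_le_sum fun j _ => hterm j
        have hcol : ∑ j, |Gmat xd w (x s) j i| / xd j ≤ φ s := by
          refine Finset.single_le_sum (f := fun i => ∑ j, |Gmat xd w (x s) j i| / xd j)
            (fun k _ => ?_) (Finset.mem_univ i)
          exact Finset.sum_nonneg fun j _ => div_nonneg (abs_nonneg _) (hpos j).le
        have hφs : φ s ≤ L := hφL s (Set.Ico_subset_Icc_self hs)
        have hneg : -vf s i ≤ L * f s := by
          have h6 : (∑ j, |Gmat xd w (x s) j i| / xd j) * f s ≤ L * f s := by
            apply mul_le_mul_of_nonneg_right (le_trans hcol hφs) hm.le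
          linarith
        have hB's : B' s = (L + 1) * f s := by
          rw [hfB]
          simp only [hBdef, hB'def]
          ring
        rw [hB's]
        nlinarith
      intro t ht
      exact image_le_of_liminf_slope_right_lt_deriv_boundary hfc hf'cond ha hB hbound ht
    -- let ε → 0
    intro i
    by_contra hneg
    push_neg at hneg
    have hfT : 0 < f T := lt_of_lt_of_le (by linarith) (hfle T i)
    have hC : 0 < Real.exp ((L + 1) * T) := Real.exp_pos _
    have h1 := key (f T / (2 * Real.exp ((L + 1) * T))) (by positivity) T
      (Set.right_mem_Icc.2 hT)
    have h2 : f T / (2 * Real.exp ((L + 1) * T)) * Real.exp ((L + 1) * T) = f T / 2 := by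
      field_simp
    rw [h2] at h1
    linarith
  intro t ht
  exact ⟨hnonneg t ht, hsum t ht⟩
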